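/- Let h be a positive C¹ function on (0,1] with |r h'(r)| ≤ C_h on (0,1), r h'(r) → 0 as r → 0⁺, and suppose R² h'(R)² ≤ ∫_0^R h'(r)² r³ dr for all R ∈ (0,1). Then h' ≡ 0 on (0,1). -/
import Mathlib


open Set Filter

theorem stmt13 (h : ℝ → ℝ) (hC1 : ContDiffOn ℝ 1 h (Ioc 0 1))
    (C : ℝ) (hCpos : 0 < C)
    (hbd : ∀ r ∈ Ioo (0:ℝ) 1, |r * deriv h r| ≤ C)
    (hlim : Tendsto (fun r : ℝ => r * deriv h r) (nhdsWithin 0 (Ioi 0)) (nhds 0))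
    (hineq : ∀ R ∈ Ioo (0:ℝ) 1,
      R ^ 2 * (deriv h R) ^ 2 ≤ ∫ r in (0:ℝ)..R, (deriv h r) ^ 2 * r ^ 3) :
    ∀ r ∈ Ioo (0:ℝ) 1, deriv h r = 0 := by
  have key : ∀ n : ℕ, ∀ R ∈ Ioo (0:ℝ) 1,
      R ^ 2 * (deriv h R) ^ 2 ≤ C ^ 2 * R ^ (2 * n) / 2 ^ n := by
    intro n
    induction n with
    | zero =>
      intro R hR
      have := hbd R hR
      have : (R * deriv h R) ^ 2 ≤ C ^ 2 := by
        rw [← sq_abs]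
        exact pow_le_pow_left₀ (abs_nonneg _) this 2
      simpa [mul_pow] using this.trans_eq (by ring)
    | succ n IH =>
      intro R hR
      obtain ⟨hR0, hR1⟩ := hR
      -- the comparison function
      set g : ℝ → ℝ := fun r => C ^ 2 / 2 ^ n * r ^ (2 * n + 1) with hg
      have hgint : IntervalIntegrable g MeasureTheory.volume 0 R :=
        (Continuous.intervalIntegrable (by continuity) 0 R)
      have hmeas : MeasureTheory.AEStronglyMeasurable
          (fun r => (deriv h r) ^ 2 * r ^ 3)
          (MeasureTheory.volume.restrict (Ioc (0:ℝ) R)) :=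
        (((measurable_deriv h).pow_const 2).mul (measurable_id.pow_const 3)).aestronglyMeasurable
      have hle : ∀ r ∈ Ioc (0:ℝ) R, (deriv h r) ^ 2 * r ^ 3 ≤ g r := by
        intro r hr
        have hr01 : r ∈ Ioo (0:ℝ) 1 := ⟨hr.1, lt_of_le_of_lt hr.2 hR1⟩
        have := IH r hr01
        have hcalc : (deriv h r) ^ 2 * r ^ 3 = (r ^ 2 * (deriv h r) ^ 2) * r := by ring
        rw [hcalc]
        calc (r ^ 2 * (deriv h r) ^ 2) * r ≤ (C ^ 2 * r ^ (2 * n) / 2 ^ n) * r :=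
              mul_le_mul_of_nonneg_right this hr.1.le
          _ = g r := by simp only [hg]; ring
      have hfint : IntervalIntegrable (fun r => (deriv h r) ^ 2 * r ^ 3)
          MeasureTheory.volume 0 R := by
        rw [intervalIntegrable_iff_integrableOn_Ioc_of_le hR0.le]
        refine MeasureTheory.Integrable.mono' hgint.1 hmeas ?_
        filter_upwards [MeasureTheory.ae_restrict_mem measurableSet_Ioc] with r hr
        have h1 : (0:ℝ) ≤ (deriv h r) ^ 2 * r ^ 3 :=
          mul_nonneg (sq_nonneg _) (pow_nonneg hr.1.le 3)
        rw [Real.norm_eq_abs, abs_of_nonneg h1]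
        exact hle r hr
      have hmono : ∫ r in (0:ℝ)..R, (deriv h r) ^ 2 * r ^ 3 ≤ ∫ r in (0:ℝ)..R, g r := by
        apply intervalIntegral.integral_mono_on hR0.le hfint hgint
        intro r hr
        rcases eq_or_lt_of_le hr.1 with h0 | h0
        · simp [g, ← h0]
        · exact hle r ⟨h0, hr.2⟩
      have hgval : ∫ r in (0:ℝ)..R, g r
          = C ^ 2 / 2 ^ n * (R ^ (2 * n + 2) / (2 * n + 2)) := by
        rw [intervalIntegral.integral_const_mul, integral_pow]
        push_cast
        ring
      have hfinal : C ^ 2 / 2 ^ n * (R ^ (2 * n + 2) / (2 * n + 2))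
          ≤ C ^ 2 * R ^ (2 * (n + 1)) / 2 ^ (n + 1) := by
        have h2 : (2:ℝ) ≤ 2 * n + 2 := by have := Nat.cast_nonneg (α := ℝ) n; linarith
        have : R ^ (2 * n + 2) / (2 * (n:ℝ) + 2) ≤ R ^ (2 * n + 2) / 2 :=
          div_le_div_of_nonneg_left (pow_nonneg hR0.le _) two_pos h2
        calc C ^ 2 / 2 ^ n * (R ^ (2 * n + 2) / (2 * n + 2))
            ≤ C ^ 2 / 2 ^ n * (R ^ (2 * n + 2) / 2) :=
              mul_le_mul_of_nonneg_left this (by positivity)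
          _ = C ^ 2 * R ^ (2 * (n + 1)) / 2 ^ (n + 1) := by
              rw [show 2 * (n + 1) = 2 * n + 2 by ring]; ring
      calc R ^ 2 * (deriv h R) ^ 2 ≤ ∫ r in (0:ℝ)..R, (deriv h r) ^ 2 * r ^ 3 :=
            hineq R ⟨hR0, hR1⟩
        _ ≤ ∫ r in (0:ℝ)..R, g r := hmono
        _ = C ^ 2 / 2 ^ n * (R ^ (2 * n + 2) / (2 * n + 2)) := hgval
        _ ≤ C ^ 2 * R ^ (2 * (n + 1)) / 2 ^ (n + 1) := hfinal
  intro r hr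
  obtain ⟨hr0, hr1⟩ := hr
  have hb : ∀ n : ℕ, r ^ 2 * (deriv h r) ^ 2 ≤ C ^ 2 * (1 / 2) ^ n := by
    intro n
    have h1 : r ^ (2 * n) ≤ 1 := pow_le_one₀ hr0.le hr1.le
    calc r ^ 2 * (deriv h r) ^ 2 ≤ C ^ 2 * r ^ (2 * n) / 2 ^ n := key n r ⟨hr0, hr1⟩
      _ ≤ C ^ 2 * 1 / 2 ^ n := by
          apply div_le_div_of_nonneg_right _ (by positivity)
          · exact mul_le_mul_of_nonneg_left h1 (by positivity)
      _ = C ^ 2 * (1 / 2) ^ n := by rw [div_pow, one_pow]; ring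
  have htend : Tendsto (fun n : ℕ => C ^ 2 * (1 / 2) ^ n) atTop (nhds 0) := by
    have := tendsto_pow_atTop_nhds_zero_of_lt_one (by norm_num : (0:ℝ) ≤ 1/2)
      (by norm_num : (1/2:ℝ) < 1)
    simpa using this.const_mul (C ^ 2)
  have hle0 : r ^ 2 * (deriv h r) ^ 2 ≤ 0 := ge_of_tendsto' htend hb
  have : (deriv h r) ^ 2 ≤ 0 := by
    by_contra hc
    push_neg at hc
    have := mul_pos (by positivity : (0:ℝ) < r ^ 2) hc
    linarith
  have := le_antisymm this (sq_nonneg _)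
  exact pow_eq_zero_iff (by norm_num) |>.mp this
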